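/- Let n ≥ 1 and let V_n be the (n+1)-dimensional real vector space of homogeneous polynomials of degree n in ℝ[x,y]. Call p ∈ ℝ[x,y] invariant under time-evolution if for all real A, φ the function t ↦ p(A·sin(t−φ), A·cos(t−φ)) is constant in t, and 0-mesic if (1/2π)·∫₀^{2π} p(A·sin(t−φ), A·cos(t−φ)) dt = 0 for all real A, φ. If n is odd, then every element of V_n is 0-mesic. If n is even, then V_n is the direct sum of an n-dimensional subspace consisting of 0-mesic polynomials and the 1-dimensional subspace spanned by (x²+y²)^{n/2}, every element of which is invariant under time-evolution. -/

import Mathlib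

open MvPolynomial Real


lemma cont_vec : Continuous fun t : ℝ => ![Real.sin t, Real.cos t] := by
  apply continuous_pi
  intro i
  fin_cases i <;> simp [Real.continuous_sin, Real.continuous_cos]

lemma cont_eval (p : MvPolynomial (Fin 2) ℝ) :
    Continuous fun t : ℝ => eval (![Real.sin t, Real.cos t]) p :=
  (MvPolynomial.continuous_eval p).comp cont_vec

noncomputable def Lmap : MvPolynomial (Fin 2) ℝ →ₗ[ℝ] ℝ where
  toFun p := ∫ t in (0:ℝ)..(2*π), eval (![Real.sin t, Real.cos t]) p
  map_add' p q := by
    simp only [map_add]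
    exact intervalIntegral.integral_add ((cont_eval p).intervalIntegrable _ _)
      ((cont_eval q).intervalIntegrable _ _)
  map_smul' c p := by
    simp only [MvPolynomial.smul_eval, RingHom.id_apply, smul_eq_mul]
    exact intervalIntegral.integral_const_mul c _

lemma g_periodic (p : MvPolynomial (Fin 2) ℝ) :
    Function.Periodic (fun t => eval (![Real.sin t, Real.cos t]) p) (2*π) := by
  intro t
  simp [Real.sin_add_two_pi, Real.cos_add_two_pi]

lemma eval_smul_homog' {n : ℕ} {p : MvPolynomial (Fin 2) ℝ} (h : p.IsHomogeneous n)
    (c : ℝ) (v : Fin 2 → ℝ) : eval (c • v) p = c ^ n * eval v p := by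
  rw [eval_eq, eval_eq, Finset.mul_sum]
  refine Finset.sum_congr rfl fun d hd => ?_
  have hdeg : ∑ i ∈ d.support, d i = n := by
    have h1 := h (mem_support_iff.mp hd)
    rw [show (Finsupp.weight 1 : (Fin 2 →₀ ℕ) →+ ℕ) = Finsupp.weight (fun _ => 1) from rfl,
      ← Finsupp.degree_eq_weight_one] at h1
    exact h1
  rw [← hdeg]
  simp only [Pi.smul_apply, smul_eq_mul, mul_pow]
  rw [Finset.prod_mul_distrib, Finset.prod_pow_eq_pow_sum]
  ring

lemma integral_reduce {n : ℕ} {p : MvPolynomial (Fin 2) ℝ} (hp : p.IsHomogeneous n)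
    (A φ : ℝ) :
    (∫ t in (0:ℝ)..(2*π), eval (![A * Real.sin (t-φ), A * Real.cos (t-φ)]) p)
      = A ^ n * Lmap p := by
  have h1 : ∀ t : ℝ, (![A * Real.sin (t-φ), A * Real.cos (t-φ)] : Fin 2 → ℝ)
      = A • ![Real.sin (t-φ), Real.cos (t-φ)] := by
    intro t
    funext i
    fin_cases i <;> simp
  have h2 : (∫ t in (0:ℝ)..(2*π), eval (![A * Real.sin (t-φ), A * Real.cos (t-φ)]) p)
      = ∫ t in (0:ℝ)..(2*π), A ^ n * eval (![Real.sin (t-φ), Real.cos (t-φ)]) p := by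
    refine intervalIntegral.integral_congr fun t _ => ?_
    rw [h1 t, eval_smul_homog' hp]
  rw [h2, intervalIntegral.integral_const_mul]
  congr 1
  rw [intervalIntegral.integral_comp_sub_right (fun t => eval (![Real.sin t, Real.cos t]) p) φ]
  rw [show (0:ℝ) - φ = -φ by ring, show 2*π - φ = -φ + 2*π by ring]
  have := (g_periodic p).intervalIntegral_add_eq (-φ) 0
  rw [this, zero_add]
  rfl

lemma Lmap_odd {n : ℕ} (hn : Odd n) {p : MvPolynomial (Fin 2) ℝ} (hp : p.IsHomogeneous n) :
    Lmap p = 0 := by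
  set g : ℝ → ℝ := fun t => eval (![Real.sin t, Real.cos t]) p with hg
  have key : ∀ t, g (t + π) = -g t := by
    intro t
    have hv : (![Real.sin (t+π), Real.cos (t+π)] : Fin 2 → ℝ)
        = (-1 : ℝ) • ![Real.sin t, Real.cos t] := by
      funext i
      fin_cases i <;> simp [Real.sin_add_pi, Real.cos_add_pi]
    simp only [hg]
    rw [hv, eval_smul_homog' hp, hn.neg_one_pow, neg_one_mul]
  have h1 : (∫ t in (0:ℝ)..(2*π), g t) = ∫ t in (0:ℝ)..(2*π), g (t + π) := by
    rw [intervalIntegral.integral_comp_add_right g π]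
    rw [show (0:ℝ) + π = π by ring]
    have := (g_periodic p).intervalIntegral_add_eq π 0
    rw [show 2*π + π = π + 2*π by ring, this, zero_add]
  have h2 : (∫ t in (0:ℝ)..(2*π), g (t + π)) = -∫ t in (0:ℝ)..(2*π), g t := by
    rw [← intervalIntegral.integral_neg]
    exact intervalIntegral.integral_congr fun t _ => key t
  have : Lmap p = ∫ t in (0:ℝ)..(2*π), g t := rfl
  rw [this]
  linarith [h1.trans h2]

lemma degree_fin2 (d : Fin 2 →₀ ℕ) : d.degree = d 0 + d 1 := by
  rw [Finsupp.degree_apply, Finset.sum_subset (Finset.subset_univ d.support)]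
  · simp [Fin.sum_univ_two]
  · intro x _ hx; simpa using hx

noncomputable def degEquiv (n : ℕ) : {d : Fin 2 →₀ ℕ // d.degree = n} ≃ Fin (n + 1) where
  toFun d := ⟨d.1 0, by have := d.2; rw [degree_fin2] at this; omega⟩
  invFun i := ⟨Finsupp.single 0 i.1 + Finsupp.single 1 (n - i.1), by
    rw [degree_fin2]; simp [Finsupp.single_apply]; omega⟩
  left_inv d := by
    have hd := d.2
    rw [degree_fin2] at hd
    ext i
    fin_cases i <;> simp [Finsupp.single_apply] <;> omega
  right_inv i := by ext; simp [Finsupp.single_apply]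

lemma finrank_homog (n : ℕ) :
    Module.finrank ℝ (homogeneousSubmodule (Fin 2) ℝ n) = n + 1 := by
  have : Fintype {d : Fin 2 →₀ ℕ | d.degree = n} := Fintype.ofEquiv _ (degEquiv n).symm
  have e1 := AddMonoidAlgebra.supportedEquivFinsupp (S := ℝ) (R := ℝ) {d : Fin 2 →₀ ℕ | d.degree = n}
  have h2 : Module.finrank ℝ ({d : Fin 2 →₀ ℕ | d.degree = n} →₀ ℝ) = n + 1 := by
    rw [Module.finrank_finsupp_self]
    have : Fintype {d : Fin 2 →₀ ℕ // d.degree = n} := ‹Fintype {d : Fin 2 →₀ ℕ | d.degree = n}›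
    have hc : Fintype.card {d : Fin 2 →₀ ℕ | d.degree = n}
        = Fintype.card {d : Fin 2 →₀ ℕ // d.degree = n} := Fintype.card_congr (Equiv.refl _)
    rw [hc, Fintype.card_congr (degEquiv n), Fintype.card_fin]
  rw [homogeneousSubmodule_eq_finsupp_supported]
  exact e1.finrank_eq.trans h2

lemma fd_homog (n : ℕ) : FiniteDimensional ℝ (homogeneousSubmodule (Fin 2) ℝ n) := by
  have : Fintype {d : Fin 2 →₀ ℕ | d.degree = n} := Fintype.ofEquiv _ (degEquiv n).symm
  have e1 := AddMonoidAlgebra.supportedEquivFinsupp (S := ℝ) (R := ℝ) {d : Fin 2 →₀ ℕ | d.degree = n}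
  rw [homogeneousSubmodule_eq_finsupp_supported]
  exact e1.symm.finiteDimensional

lemma q_eval (m : ℕ) (a b : ℝ) :
    eval (![a, b]) (((X 0 : MvPolynomial (Fin 2) ℝ) ^ 2 + X 1 ^ 2) ^ m)
      = (a ^ 2 + b ^ 2) ^ m := by
  simp

lemma q_homog {n : ℕ} (hn : Even n) :
    (((X 0 : MvPolynomial (Fin 2) ℝ) ^ 2 + X 1 ^ 2) ^ (n / 2)).IsHomogeneous n := by
  have h1 : ((X 0 : MvPolynomial (Fin 2) ℝ) ^ 2 + X 1 ^ 2).IsHomogeneous 2 :=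
    (isHomogeneous_X_pow 0 2).add (isHomogeneous_X_pow 1 2)
  have := h1.pow (n / 2)
  rwa [Nat.mul_div_cancel' hn.two_dvd] at this

lemma Lmap_q {n : ℕ} :
    Lmap (((X 0 : MvPolynomial (Fin 2) ℝ) ^ 2 + X 1 ^ 2) ^ (n / 2)) = 2 * π := by
  have : Lmap (((X 0 : MvPolynomial (Fin 2) ℝ) ^ 2 + X 1 ^ 2) ^ (n / 2))
      = ∫ t in (0:ℝ)..(2*π), eval (![Real.sin t, Real.cos t])
          (((X 0 : MvPolynomial (Fin 2) ℝ) ^ 2 + X 1 ^ 2) ^ (n / 2)) := rfl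
  rw [this]
  have : (∫ t in (0:ℝ)..(2*π), eval (![Real.sin t, Real.cos t])
          (((X 0 : MvPolynomial (Fin 2) ℝ) ^ 2 + X 1 ^ 2) ^ (n / 2)))
      = ∫ t in (0:ℝ)..(2*π), (1:ℝ) := by
    refine intervalIntegral.integral_congr fun t _ => ?_
    rw [q_eval, Real.sin_sq_add_cos_sq, one_pow]
  rw [this]
  simp

theorem circle_action_homomesy_invariance
    (n : ℕ) (hn : 1 ≤ n) :
    (Odd n → ∀ p ∈ homogeneousSubmodule (Fin 2) ℝ n, ∀ A φ : ℝ,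
        (1 / (2 * π)) * ∫ t in (0:ℝ)..(2 * π),
          eval (![A * Real.sin (t - φ), A * Real.cos (t - φ)]) p = 0) ∧
    (Even n → ∃ W : Submodule ℝ (MvPolynomial (Fin 2) ℝ),
        W ≤ homogeneousSubmodule (Fin 2) ℝ n ∧
        Module.finrank ℝ W = n ∧
        (∀ p ∈ W, ∀ A φ : ℝ,
          (1 / (2 * π)) * ∫ t in (0:ℝ)..(2 * π),
            eval (![A * Real.sin (t - φ), A * Real.cos (t - φ)]) p = 0) ∧
        homogeneousSubmodule (Fin 2) ℝ n
          = W ⊔ Submodule.span ℝ {((X 0 : MvPolynomial (Fin 2) ℝ) ^ 2 + X 1 ^ 2) ^ (n / 2)} ∧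
        W ⊓ Submodule.span ℝ {((X 0 : MvPolynomial (Fin 2) ℝ) ^ 2 + X 1 ^ 2) ^ (n / 2)} = ⊥ ∧
        Module.finrank ℝ
          (Submodule.span ℝ {((X 0 : MvPolynomial (Fin 2) ℝ) ^ 2 + X 1 ^ 2) ^ (n / 2)}) = 1 ∧
        (∀ p ∈ Submodule.span ℝ
            ({((X 0 : MvPolynomial (Fin 2) ℝ) ^ 2 + X 1 ^ 2) ^ (n / 2)} : Set (MvPolynomial (Fin 2) ℝ)),
          ∀ A φ t₁ t₂ : ℝ,
            eval (![A * Real.sin (t₁ - φ), A * Real.cos (t₁ - φ)]) p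
              = eval (![A * Real.sin (t₂ - φ), A * Real.cos (t₂ - φ)]) p)) := by
  constructor
  · -- odd case
    intro hodd p hp A φ
    rw [integral_reduce ((mem_homogeneousSubmodule n p).mp hp) A φ,
      Lmap_odd hodd ((mem_homogeneousSubmodule n p).mp hp)]
    ring
  · intro heven
    set q : MvPolynomial (Fin 2) ℝ := ((X 0 : MvPolynomial (Fin 2) ℝ) ^ 2 + X 1 ^ 2) ^ (n / 2)
      with hqdef
    have hq_homog : q.IsHomogeneous n := q_homog heven
    have hqH : q ∈ homogeneousSubmodule (Fin 2) ℝ n := (mem_homogeneousSubmodule n q).mpr hq_homog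
    have hLq : Lmap q = 2 * π := Lmap_q
    have h2pi : (2 * π : ℝ) ≠ 0 := by positivity
    have hq0 : q ≠ 0 := by
      intro h
      rw [h, map_zero] at hLq
      exact h2pi hLq.symm
    set W : Submodule ℝ (MvPolynomial (Fin 2) ℝ)
      := homogeneousSubmodule (Fin 2) ℝ n ⊓ LinearMap.ker Lmap with hWdef
    have hWle : W ≤ homogeneousSubmodule (Fin 2) ℝ n := inf_le_left
    -- sup
    have hsup : homogeneousSubmodule (Fin 2) ℝ n = W ⊔ Submodule.span ℝ {q} := by
      apply le_antisymm
      · intro p hp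
        have hdecomp : p = (p - (Lmap p / (2 * π)) • q) + (Lmap p / (2 * π)) • q := by ring
        rw [hdecomp]
        refine Submodule.add_mem_sup ?_ (Submodule.smul_mem _ _ (Submodule.subset_span rfl))
        refine ⟨Submodule.sub_mem _ hp (Submodule.smul_mem _ _ hqH), ?_⟩
        show Lmap (p - (Lmap p / (2 * π)) • q) = 0
        rw [map_sub, map_smul, hLq, smul_eq_mul]
        field_simp
        ring
      · refine sup_le hWle ?_
        rw [Submodule.span_le, Set.singleton_subset_iff]
        exact hqH
    -- inf
    have hinf : W ⊓ Submodule.span ℝ {q} = ⊥ := by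
      rw [eq_bot_iff]
      rintro p ⟨⟨-, hker⟩, hspan⟩
      obtain ⟨c, rfl⟩ := Submodule.mem_span_singleton.mp hspan
      replace hker : Lmap (c • q) = 0 := hker
      rw [map_smul, hLq, smul_eq_mul] at hker
      have : c = 0 := by
        rcases mul_eq_zero.mp hker with h | h
        · exact h
        · exact absurd h h2pi
      simp [this]
    -- finrank span = 1
    have hspan1 : Module.finrank ℝ (Submodule.span ℝ {q}) = 1 := finrank_span_singleton hq0
    -- finrank W = n
    haveI : FiniteDimensional ℝ (homogeneousSubmodule (Fin 2) ℝ n) := fd_homog n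
    haveI hWfd : FiniteDimensional ℝ W := Submodule.finiteDimensional_of_le hWle
    have hrank : Module.finrank ℝ W = n := by
      have key := Submodule.finrank_sup_add_finrank_inf_eq W (Submodule.span ℝ {q})
      rw [← hsup, hinf, finrank_homog, hspan1, finrank_bot] at key
      omega
    refine ⟨W, hWle, hrank, ?_, hsup, hinf, hspan1, ?_⟩
    · intro p hp A φ
      obtain ⟨hph, hpk⟩ := hp
      rw [integral_reduce ((mem_homogeneousSubmodule n p).mp hph) A φ,
        LinearMap.mem_ker.mp hpk]
      ring
    · intro p hp A φ t₁ t₂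
      obtain ⟨c, rfl⟩ := Submodule.mem_span_singleton.mp hp
      have hval : ∀ t : ℝ, eval (![A * Real.sin (t - φ), A * Real.cos (t - φ)]) q
          = (A ^ 2) ^ (n / 2) := by
        intro t
        rw [hqdef, q_eval]
        congr 1
        rw [mul_pow, mul_pow, ← mul_add, Real.sin_sq_add_cos_sq, mul_one]
      rw [MvPolynomial.smul_eval, MvPolynomial.smul_eval, hval, hval]
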